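/- Let K > 0 and consider a C¹ solution z : [0,∞) → ℝ of the ODE z' = -K z² + R(z) with |R(z)| ≤ M|z|³, with initial value z(0) = δ > 0 sufficiently small. Then z(x) > 0 for all x ≥ 0 and there exist constants 0 < c ≤ C (depending on K, M) such that c δ/(1+δx) ≤ z(x) ≤ C δ/(1+δx) for all x ≥ 0. Moreover |z'(x)| ≤ C δ²/(1+δx)². -/

import Mathlib

open Set Filter Topology Real

lemma stmt10_deriv_bound {K M δ : ℝ} (hK : 0 < K) (hM : 0 ≤ M) (hδ : 0 < δ)
    (hMδ : M * δ ≤ K / 2) {u r : ℝ} (hu0 : 0 ≤ u) (huδ : u ≤ δ)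
    (hr : |r| ≤ M * |u| ^ 3) :
    |(-K * u ^ 2 + r)| ≤ 3 * K / 2 * u ^ 2 := by
  have h3 : |u| ^ 3 = u ^ 2 * u := by rw [abs_of_nonneg hu0]; ring
  rw [h3] at hr
  have h1 := abs_le.1 hr
  have k1 : M * (u ^ 2 * u) ≤ M * δ * u ^ 2 := by
    nlinarith [mul_nonneg (mul_nonneg hM (sq_nonneg u)) (sub_nonneg.2 huδ)]
  have k2 : M * δ * u ^ 2 ≤ K / 2 * u ^ 2 := by
    nlinarith [mul_nonneg (sub_nonneg.2 hMδ) (sq_nonneg u)]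
  rw [abs_le]
  constructor <;> nlinarith [h1.1, h1.2, sq_nonneg u]

lemma stmt10_pos {K M δ : ℝ} (hK : 0 < K) (hM : 0 ≤ M) (hδ : 0 < δ)
    (hMδ : M * δ ≤ K / 2) {z R : ℝ → ℝ} (hz0 : z 0 = δ)
    (hR : ∀ y, |R y| ≤ M * |y| ^ 3)
    (hz : ∀ x ∈ Ici (0:ℝ), HasDerivAt z (-K * z x ^ 2 + R (z x)) x) :
    ∀ x ∈ Ici (0:ℝ), 0 < z x ∧ z x ≤ δ := by
  by_contra hcon
  push_neg at hcon
  set B : Set ℝ := {x | 0 ≤ x ∧ (z x ≤ 0 ∨ δ < z x)} with hBdef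
  have hBne : B.Nonempty := by
    obtain ⟨x, hx, h⟩ := hcon
    refine ⟨x, hx, ?_⟩
    rcases le_or_gt (z x) 0 with h0 | h0
    · exact Or.inl h0
    · rcases le_or_gt (z x) δ with h1 | h1
      · exact absurd (h h0) (not_lt.2 h1)
      · exact Or.inr h1
  have hBbd : BddBelow B := ⟨0, fun x hx => hx.1⟩
  set T := sInf B with hTdef
  have hT0 : 0 ≤ T := le_csInf hBne fun x hx => hx.1
  have hTlb : ∀ s, 0 ≤ s → s < T → 0 < z s ∧ z s ≤ δ := by
    intro s hs hsT
    by_contra hc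
    have hsB : s ∈ B := by
      refine ⟨hs, ?_⟩
      rcases le_or_gt (z s) 0 with h0 | h0
      · exact Or.inl h0
      · rcases le_or_gt (z s) δ with h1 | h1
        · exact absurd ⟨h0, h1⟩ hc
        · exact Or.inr h1
    exact absurd (csInf_le hBbd hsB) (not_le.2 hsT)
  have hcontT : ContinuousAt z T := (hz T hT0).continuousAt
  -- dichotomy at T
  have hzT : z T ≤ 0 ∨ δ ≤ z T := by
    by_contra hc
    push_neg at hc
    obtain ⟨h1, h2⟩ := hc
    have h1' : 0 < z T := h1
    have hev : ∀ᶠ u in 𝓝 T, 0 < z u ∧ z u < δ := by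
      have := hcontT.eventually (eventually_and.2
        ⟨eventually_gt_nhds h1', eventually_lt_nhds h2⟩ : ∀ᶠ y in 𝓝 (z T), 0 < y ∧ y < δ)
      exact this
    obtain ⟨η, hη, hball⟩ := Metric.eventually_nhds_iff.mp hev
    have : T + η ≤ T := by
      apply le_csInf hBne
      intro b hb
      have hbT : T ≤ b := csInf_le hBbd hb
      by_contra hlt
      push_neg at hlt
      have : dist b T < η := by
        rw [Real.dist_eq, abs_lt]; constructor <;> linarith
      obtain ⟨p1, p2⟩ := hball this
      rcases hb.2 with h | h
      · linarith
      · linarith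
    linarith
  rcases hzT with hzT | hzT
  · -- z T = 0, Gronwall contradiction
    have hTpos : 0 < T := by
      rcases eq_or_lt_of_le hT0 with h | h
      · exfalso; rw [← h, hz0] at hzT; linarith
      · exact h
    have hzTleft : ∀ s ∈ Icc (0:ℝ) T, 0 ≤ z s ∧ z s ≤ δ := by
      intro s hs
      obtain ⟨hs0, hsT⟩ := hs
      rcases eq_or_lt_of_le hsT with h | h
      · subst h
        refine ⟨?_, le_of_lt (lt_of_le_of_lt hzT hδ)⟩
        -- z s ≥ 0 by left limit
        have htd : Tendsto z (𝓝[<] T) (𝓝 (z T)) :=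
          hcontT.continuousWithinAt.tendsto
        refine ge_of_tendsto htd ?_
        filter_upwards [Ioo_mem_nhdsLT hTpos] with t ht
        exact (hTlb t (le_of_lt ht.1) ht.2).1.le
      · exact ⟨(hTlb s hs0 h).1.le, (hTlb s hs0 h).2⟩
    have hzT0 : z T = 0 := le_antisymm hzT (hzTleft T ⟨hT0, le_refl T⟩).1
    -- reversed function
    set y : ℝ → ℝ := fun t => z (T - t) with hy
    have hycont : ContinuousOn y (Icc 0 T) := by
      intro t ht
      have hmem : T - t ∈ Ici (0:ℝ) := by simp [ht.2]
      exact ((hz _ hmem).continuousAt.comp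
        (by fun_prop : Continuous fun t : ℝ => T - t).continuousAt).continuousWithinAt
    have hyderiv : ∀ t ∈ Ico (0:ℝ) T,
        HasDerivWithinAt y ((-K * z (T - t) ^ 2 + R (z (T - t))) * (-1)) (Ici t) t := by
      intro t ht
      have hmem : T - t ∈ Ici (0:ℝ) := by simp [ht.2.le]
      exact ((hz _ hmem).comp t ((hasDerivAt_id t).const_sub T)).hasDerivWithinAt
    have hbound : ∀ t ∈ Ico (0:ℝ) T,
        ‖(-K * z (T - t) ^ 2 + R (z (T - t))) * (-1)‖ ≤ (3 * K / 2 * δ) * ‖y t‖ + 0 := by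
      intro t ht
      have hmem : T - t ∈ Icc (0:ℝ) T := ⟨by linarith [ht.2.le], by linarith [ht.1]⟩
      obtain ⟨hz0', hzδ'⟩ := hzTleft _ hmem
      have hb := stmt10_deriv_bound hK hM hδ hMδ hz0' hzδ' (hR (z (T - t)))
      have hnorm : ‖y t‖ = z (T - t) := by
        rw [hy]; simp [Real.norm_eq_abs, abs_of_nonneg hz0']
      rw [norm_mul, norm_neg, norm_one, mul_one, hnorm, Real.norm_eq_abs, add_zero]
      calc |(-K * z (T - t) ^ 2 + R (z (T - t)))| ≤ 3 * K / 2 * z (T - t) ^ 2 := hb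
        _ ≤ 3 * K / 2 * δ * z (T - t) := by nlinarith [mul_nonneg hz0' (sub_nonneg.2 hzδ')]
    have hy0 : ‖y 0‖ ≤ 0 := by
      rw [hy]; simp [hzT0]
    have := norm_le_gronwallBound_of_norm_deriv_right_le hycont hyderiv hy0 hbound T
      ⟨hT0, le_refl T⟩
    rw [gronwallBound_ε0, zero_mul] at this
    have : z 0 = 0 := by simpa [hy] using this
    rw [hz0] at this; linarith
  · -- z T = δ, derivative negative contradiction
    have hzTδ : z T = δ := by
      rcases eq_or_lt_of_le hT0 with h | h
      · rw [← h, hz0]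
      · refine le_antisymm ?_ hzT
        have htd : Tendsto z (𝓝[<] T) (𝓝 (z T)) := hcontT.continuousWithinAt.tendsto
        refine le_of_tendsto htd ?_
        filter_upwards [Ioo_mem_nhdsLT h] with t ht
        exact (hTlb t (le_of_lt ht.1) ht.2).2
    have hd := hz T hT0
    have hdneg : -K * z T ^ 2 + R (z T) < 0 := by
      have hr := (abs_le.1 (hR (z T))).2
      rw [hzTδ] at hr ⊢
      rw [abs_of_nonneg hδ.le] at hr
      nlinarith [sq_nonneg δ, mul_pos hδ (mul_pos hδ hδ)]
    -- slope: eventually z u < z T for u > T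
    have hslope : Tendsto (slope z T) (𝓝[≠] T) (𝓝 (-K * z T ^ 2 + R (z T))) :=
      hasDerivAt_iff_tendsto_slope.1 hd
    have hslope' : ∀ᶠ u in 𝓝[>] T, slope z T u < 0 := by
      have : 𝓝[>] T ≤ 𝓝[≠] T := nhdsWithin_mono _ fun u hu => ne_of_gt hu
      exact (hslope.mono_left this).eventually (eventually_lt_nhds hdneg)
    have hlt : ∀ᶠ u in 𝓝[>] T, z u < δ := by
      filter_upwards [hslope', self_mem_nhdsWithin] with u hu hu'
      have huT : (0:ℝ) < u - T := sub_pos.2 hu'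
      rw [slope_def_field, div_neg_iff] at hu
      rcases hu with ⟨_, h2⟩ | ⟨h1, _⟩
      · linarith
      · rw [hzTδ] at h1; linarith
    have hgt : ∀ᶠ u in 𝓝[>] T, 0 < z u := by
      have : ∀ᶠ u in 𝓝 T, 0 < z u :=
        hcontT.eventually (eventually_gt_nhds (by rw [hzTδ]; exact hδ))
      exact this.filter_mono nhdsWithin_le_nhds
    obtain ⟨u, huT, hIoo⟩ := mem_nhdsGT_iff_exists_Ioo_subset.1 (hlt.and hgt)
    have : u ≤ T := by
      apply le_csInf hBne
      intro b hb
      have hbT : T ≤ b := csInf_le hBbd hb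
      rcases eq_or_lt_of_le hbT with h | h
      · exfalso
        rcases hb.2 with hh | hh <;> rw [← h, hzTδ] at hh <;> linarith
      · by_contra hbu
        push_neg at hbu
        obtain ⟨p1, p2⟩ := hIoo ⟨h, hbu⟩
        rcases hb.2 with hh | hh <;> linarith
    exact absurd this (not_le.2 (mem_Ioi.1 huT))

lemma stmt10_inv {K M δ : ℝ} (hK : 0 < K) (hM : 0 ≤ M) (hδ : 0 < δ)
    (hMδ : M * δ ≤ K / 2) {z R : ℝ → ℝ} (hz0 : z 0 = δ)
    (hR : ∀ y, |R y| ≤ M * |y| ^ 3)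
    (hz : ∀ x ∈ Ici (0:ℝ), HasDerivAt z (-K * z x ^ 2 + R (z x)) x)
    (hpos : ∀ x ∈ Ici (0:ℝ), 0 < z x ∧ z x ≤ δ) :
    ∀ x ∈ Ici (0:ℝ), 1/δ + K/2 * x ≤ (z x)⁻¹ ∧ (z x)⁻¹ ≤ 1/δ + 3*K/2 * x := by
  have hw : ∀ x ∈ Ici (0:ℝ), HasDerivAt (fun u => (z u)⁻¹)
      (-(-K * z x ^ 2 + R (z x)) / z x ^ 2) x :=
    fun x hx => (hz x hx).inv (hpos x hx).1.ne'
  have hDlb : ∀ x ∈ Ici (0:ℝ), K/2 ≤ -(-K * z x ^ 2 + R (z x)) / z x ^ 2 := by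
    intro x hx
    obtain ⟨hp, hle⟩ := hpos x hx
    have hsq : (0:ℝ) < z x ^ 2 := by positivity
    rw [le_div_iff₀ hsq]
    have hr := abs_le.1 (hR (z x))
    rw [abs_of_nonneg hp.le] at hr
    nlinarith [hr.2, mul_nonneg (mul_nonneg hM (sq_nonneg (z x))) (sub_nonneg.2 hle),
      mul_nonneg (sub_nonneg.2 hMδ) (sq_nonneg (z x))]
  have hDub : ∀ x ∈ Ici (0:ℝ), -(-K * z x ^ 2 + R (z x)) / z x ^ 2 ≤ 3*K/2 := by
    intro x hx
    obtain ⟨hp, hle⟩ := hpos x hx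
    have hsq : (0:ℝ) < z x ^ 2 := by positivity
    rw [div_le_iff₀ hsq]
    have hr := abs_le.1 (hR (z x))
    rw [abs_of_nonneg hp.le] at hr
    nlinarith [hr.1, mul_nonneg (mul_nonneg hM (sq_nonneg (z x))) (sub_nonneg.2 hle),
      mul_nonneg (sub_nonneg.2 hMδ) (sq_nonneg (z x))]
  have hwcont : ContinuousOn (fun u => (z u)⁻¹) (Ici (0:ℝ)) :=
    fun x hx => ((hw x hx).continuousAt).continuousWithinAt
  intro x hx
  constructor
  · -- lower bound via g₁ = w - K/2 * id monotone
    have hmono : MonotoneOn (fun u => (z u)⁻¹ - K/2 * u) (Ici (0:ℝ)) := by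
      apply monotoneOn_of_deriv_nonneg (convex_Ici 0)
      · exact hwcont.sub (continuousOn_const.mul continuousOn_id)
      · intro u hu
        rw [interior_Ici] at hu
        exact ((hw u (le_of_lt hu : (0:ℝ) ≤ u)).sub ((hasDerivAt_id u).const_mul (K/2))).differentiableAt.differentiableWithinAt
      · intro u hu
        rw [interior_Ici] at hu
        have hd := (hw u (le_of_lt hu : (0:ℝ) ≤ u)).sub ((hasDerivAt_id u).const_mul (K/2))
        simp only [id_eq] at hd
        rw [show (fun u => (z u)⁻¹ - K / 2 * u) = ((fun u => (z u)⁻¹) - fun y => K / 2 * y) from rfl, hd.deriv]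
        have := hDlb u (le_of_lt hu : (0:ℝ) ≤ u)
        simp only [mul_one]
        linarith
    have := hmono (self_mem_Ici) hx hx
    simp only [hz0, mul_zero, sub_zero] at this
    rw [one_div]
    linarith
  · have hmono : MonotoneOn (fun u => 3*K/2 * u - (z u)⁻¹) (Ici (0:ℝ)) := by
      apply monotoneOn_of_deriv_nonneg (convex_Ici 0)
      · exact (continuousOn_const.mul continuousOn_id).sub hwcont
      · intro u hu
        rw [interior_Ici] at hu
        exact (((hasDerivAt_id u).const_mul (3*K/2)).sub (hw u (le_of_lt hu : (0:ℝ) ≤ u))).differentiableAt.differentiableWithinAt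
      · intro u hu
        rw [interior_Ici] at hu
        have hd := ((hasDerivAt_id u).const_mul (3*K/2)).sub (hw u (le_of_lt hu : (0:ℝ) ≤ u))
        simp only [id_eq] at hd
        rw [show (fun u => 3 * K / 2 * u - (z u)⁻¹) = ((fun y => 3 * K / 2 * y) - fun u => (z u)⁻¹) from rfl, hd.deriv]
        have := hDub u (le_of_lt hu : (0:ℝ) ≤ u)
        simp only [mul_one]
        linarith
    have := hmono (self_mem_Ici) hx hx
    simp only [hz0, mul_zero, zero_sub, neg_le_sub_iff_le_add] at this
    rw [one_div]
    linarith

/-- algebraic decay of small positive solutions to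
`z' = -K z² + R(z)` with `|R(z)| ≤ M |z|³`. -/
theorem stmt_10 (K M : ℝ) (hK : 0 < K) (hM : 0 ≤ M) :
    ∃ δ₀ c C : ℝ, 0 < δ₀ ∧ 0 < c ∧ c ≤ C ∧
      ∀ (δ : ℝ) (z R : ℝ → ℝ), 0 < δ → δ ≤ δ₀ →
        z 0 = δ →
        (∀ y : ℝ, |R y| ≤ M * |y| ^ 3) →
        (∀ x ∈ Set.Ici (0 : ℝ), HasDerivAt z (-K * (z x) ^ 2 + R (z x)) x) →
        ∀ x ∈ Set.Ici (0 : ℝ),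
          0 < z x ∧
          c * δ / (1 + δ * x) ≤ z x ∧
          z x ≤ C * δ / (1 + δ * x) ∧
          |(-K * (z x) ^ 2 + R (z x))| ≤ C * δ ^ 2 / (1 + δ * x) ^ 2 := by
  set C₁ : ℝ := max 1 (2/K) with hC₁def
  refine ⟨K/(2*M+2), min 1 (2/(3*K)), max C₁ (3*K/2*C₁^2), by positivity,
    lt_min one_pos (by positivity), ?_, ?_⟩
  · calc min 1 (2/(3*K)) ≤ 1 := min_le_left _ _
      _ ≤ C₁ := le_max_left _ _
      _ ≤ _ := le_max_left _ _
  · intro δ z R hδ hδδ₀ hz0 hR hz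
    have h2M : (0:ℝ) < 2*M+2 := by linarith
    have hMδ : M * δ ≤ K/2 := by
      have h3 : δ*(2*M+2) ≤ K := (le_div_iff₀ h2M).1 hδδ₀
      nlinarith
    have hpos := stmt10_pos hK hM hδ hMδ hz0 hR hz
    have hinv := stmt10_inv hK hM hδ hMδ hz0 hR hz hpos
    intro x hx
    have hx0 : (0:ℝ) ≤ x := hx
    obtain ⟨hp1, hp2⟩ := hpos x hx
    obtain ⟨hl, hu⟩ := hinv x hx
    have hδx : 0 ≤ δ * x := mul_nonneg hδ.le hx0
    have h1p : (0:ℝ) < 1 + δ*x := by linarith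
    have hApos : 0 < 1/δ + 3*K/2*x := by positivity
    have hBpos : 0 < 1/δ + K/2*x := by positivity
    have hC₁1 : (1:ℝ) ≤ C₁ := le_max_left _ _
    have hC₁K : 1 ≤ C₁ * (K/2) := by
      calc (1:ℝ) = (2/K)*(K/2) := by field_simp
        _ ≤ C₁ * (K/2) := mul_le_mul_of_nonneg_right (le_max_right _ _) (by positivity)
    have hupper : z x ≤ C₁ * δ / (1 + δ*x) := by
      have h1 : ((z x)⁻¹)⁻¹ ≤ (1/δ + K/2*x)⁻¹ := inv_anti₀ hBpos hl
      rw [inv_inv] at h1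
      have h2 : (1/δ + K/2*x)⁻¹ ≤ C₁*δ/(1+δ*x) := by
        rw [inv_eq_one_div, div_le_div_iff₀ hBpos h1p]
        have e : C₁*δ*(1/δ + K/2*x) = C₁ + C₁*(K/2)*(δ*x) := by field_simp
        rw [e]
        nlinarith [mul_nonneg (sub_nonneg.2 hC₁K) hδx]
      linarith
    refine ⟨hp1, ?_, ?_, ?_⟩
    · have hc1 : min 1 (2/(3*K)) ≤ 1 := min_le_left _ _
      have hc2 : min 1 (2/(3*K)) ≤ 2/(3*K) := min_le_right _ _
      have hcpos : (0:ℝ) < min 1 (2/(3*K)) := lt_min one_pos (by positivity)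
      have hcK : min 1 (2/(3*K)) * (3*K/2) ≤ 1 := by
        calc min 1 (2/(3*K))*(3*K/2) ≤ (2/(3*K))*(3*K/2) :=
              mul_le_mul_of_nonneg_right hc2 (by positivity)
          _ = 1 := by field_simp
      have h1 : (1/δ + 3*K/2*x)⁻¹ ≤ z x := by
        have h := inv_anti₀ (by positivity : (0:ℝ) < (z x)⁻¹) hu
        rwa [inv_inv] at h
      have h2 : min 1 (2/(3*K))*δ/(1+δ*x) ≤ (1/δ + 3*K/2*x)⁻¹ := by
        rw [inv_eq_one_div, div_le_div_iff₀ h1p hApos]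
        have e : min 1 (2/(3*K))*δ*(1/δ + 3*K/2*x)
            = min 1 (2/(3*K)) + min 1 (2/(3*K))*(3*K/2)*(δ*x) := by field_simp
        rw [e]
        nlinarith [mul_nonneg (sub_nonneg.2 hcK) hδx]
      linarith
    · calc z x ≤ C₁*δ/(1+δ*x) := hupper
        _ ≤ max C₁ (3*K/2*C₁^2) * δ/(1+δ*x) := by gcongr; exact le_max_left _ _
    · have hb := stmt10_deriv_bound hK hM hδ hMδ hp1.le hp2 (hR (z x))
      have hsq : z x ^ 2 ≤ (C₁*δ/(1+δ*x))^2 := pow_le_pow_left₀ hp1.le hupper 2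
      calc |(-K * (z x) ^ 2 + R (z x))| ≤ 3*K/2 * z x ^ 2 := hb
        _ ≤ 3*K/2 * ((C₁*δ/(1+δ*x))^2) := mul_le_mul_of_nonneg_left hsq (by positivity)
        _ = (3*K/2*C₁^2) * δ^2/(1+δ*x)^2 := by rw [div_pow, mul_pow]; ring
        _ ≤ max C₁ (3*K/2*C₁^2) * δ^2/(1+δ*x)^2 := by gcongr; exact le_max_right _ _
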